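/- Let p > 2 be prime, a₀ ≥ 0, and R = (ℤ/p^{a₀+1}ℤ)[t]/(f(t)) with f monic of degree λ irreducible mod p. Then the multiplicative group 1 + pR is isomorphic to (ℤ/p^{a₀}ℤ)^λ. -/

import Mathlib

/-- The ring `R = (ℤ/p^{a₀+1}ℤ)[t]/(f(t))`. -/
abbrev FuchsR (p a0 : ℕ) (f : Polynomial (ZMod (p ^ (a0 + 1)))) :=
  Polynomial (ZMod (p ^ (a0 + 1))) ⧸ Ideal.span {f}

section Aux

theorem binAux2 {S : Type*} [CommRing S] (d : S) (n : ℕ) :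
    ∃ z : S, (1 + d) ^ n = 1 + n * d + d ^ 2 * z := by
  induction n with
  | zero => exact ⟨0, by ring⟩
  | succ n ih =>
    obtain ⟨z, hz⟩ := ih
    exact ⟨z + n + z * d, by rw [pow_succ, hz]; push_cast; ring⟩

theorem binAux3 {S : Type*} [CommRing S] (d : S) (n : ℕ) :
    ∃ z : S, (1 + d) ^ n = 1 + n * d + (n.choose 2) * d ^ 2 + d ^ 3 * z := by
  induction n with
  | zero => exact ⟨0, by norm_num⟩
  | succ n ih =>
    obtain ⟨z, hz⟩ := ih
    refine ⟨z + (n.choose 2) + z * d, ?_⟩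
    rw [pow_succ, hz]
    have h : (n + 1).choose 2 = n.choose 2 + n := by
      rw [Nat.choose_succ_succ]; simp [Nat.choose_one_right]; ring
    rw [h]; push_cast; ring

theorem zmodSpanIff (p n k : ℕ) (hp : p.Prime) (hk : k ≤ n) (c : ZMod (p ^ n)) :
    c ∈ Ideal.span {(p : ZMod (p ^ n)) ^ k} ↔ (p : ZMod (p ^ n)) ^ (n - k) * c = 0 := by
  have hpn : NeZero (p ^ n) := ⟨pow_ne_zero _ hp.ne_zero⟩
  constructor
  · rintro hc
    rw [Ideal.mem_span_singleton] at hc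
    obtain ⟨d, rfl⟩ := hc
    rw [← mul_assoc, ← pow_add, Nat.sub_add_cancel hk]
    have : ((p ^ n : ℕ) : ZMod (p ^ n)) = 0 := ZMod.natCast_self _
    push_cast at this
    rw [this, zero_mul]
  · intro h
    rw [Ideal.mem_span_singleton]
    have hc : c = ((c.val : ℕ) : ZMod (p ^ n)) := by
      simp [ZMod.natCast_val, ZMod.cast_id]
    rw [hc] at h ⊢
    have h0 : ((p ^ (n - k) * c.val : ℕ) : ZMod (p ^ n)) = 0 := by push_cast; exact h
    rw [ZMod.natCast_eq_zero_iff] at h0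
    have hdvd : p ^ k ∣ c.val := by
      have h2 : p ^ (n - k) * p ^ k ∣ p ^ (n - k) * c.val := by
        rw [← pow_add, Nat.sub_add_cancel hk]; exact h0
      exact (mul_dvd_mul_iff_left (pow_ne_zero _ hp.ne_zero)).mp h2
    obtain ⟨m, hm⟩ := hdvd
    exact ⟨(m : ZMod (p ^ n)), by rw [hm]; push_cast; ring⟩

theorem cardSpanPk (p n k : ℕ) (hp : p.Prime) (hk : k ≤ n) :
    Nat.card {c : ZMod (p ^ n) // c ∈ Ideal.span {(p : ZMod (p ^ n)) ^ k}} = p ^ (n - k) := by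
  have hpn : NeZero (p ^ n) := ⟨pow_ne_zero _ hp.ne_zero⟩
  have hpnk : NeZero (p ^ (n - k)) := ⟨pow_ne_zero _ hp.ne_zero⟩
  have hb : Function.Bijective (fun d : ZMod (p ^ (n - k)) =>
      (⟨((p ^ k * d.val : ℕ) : ZMod (p ^ n)), by
        rw [Ideal.mem_span_singleton]; exact ⟨(d.val : ZMod (p ^ n)), by push_cast; ring⟩⟩ :
      {c : ZMod (p ^ n) // c ∈ Ideal.span {(p : ZMod (p ^ n)) ^ k}})) := by
    constructor
    · intro d d' h
      simp only [Subtype.mk.injEq] at h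
      have hlt : ∀ e : ZMod (p ^ (n - k)), p ^ k * e.val < p ^ n := by
        intro e
        calc p ^ k * e.val < p ^ k * p ^ (n - k) :=
              (Nat.mul_lt_mul_left (pow_pos hp.pos _)).mpr (ZMod.val_lt e)
          _ = p ^ n := by rw [← pow_add, Nat.add_sub_cancel' hk]
      have h2 := (ZMod.natCast_eq_natCast_iff' _ _ _).mp h
      rw [Nat.mod_eq_of_lt (hlt d), Nat.mod_eq_of_lt (hlt d')] at h2
      have hv : d.val = d'.val := Nat.eq_of_mul_eq_mul_left (pow_pos hp.pos _) h2
      exact ZMod.val_injective _ hv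
    · rintro ⟨c, hc⟩
      rw [Ideal.mem_span_singleton] at hc
      obtain ⟨m, hm⟩ := hc
      refine ⟨((m.val : ℕ) : ZMod (p ^ (n - k))), Subtype.ext ?_⟩
      show ((p ^ k * (ZMod.val ((m.val : ℕ) : ZMod (p ^ (n - k)))) : ℕ) : ZMod (p ^ n)) = c
      rw [hm, ZMod.val_natCast]
      obtain ⟨q, r, hr, hmv⟩ : ∃ q r, r = m.val % p ^ (n - k) ∧ m.val = p ^ (n - k) * q + r :=
        ⟨m.val / p ^ (n - k), m.val % p ^ (n - k), rfl, (Nat.div_add_mod _ _).symm⟩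
      have hmc : m = ((m.val : ℕ) : ZMod (p ^ n)) := by simp [ZMod.natCast_val, ZMod.cast_id]
      conv_rhs => rw [hmc]
      rw [← hr, hmv]
      push_cast
      have hz : ((p : ZMod (p ^ n)) ^ (n - k) * (p : ZMod (p^n)) ^ k) = 0 := by
        rw [← pow_add, Nat.sub_add_cancel hk]
        have : ((p ^ n : ℕ) : ZMod (p ^ n)) = 0 := ZMod.natCast_self _
        push_cast at this; exact this
      calc (p:ZMod (p^n)) ^ k * r
          = (p:ZMod (p^n))^(n-k) * (p:ZMod (p^n))^k * q + (p:ZMod (p^n))^k * r := by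
            rw [hz]; ring
        _ = (p:ZMod (p^n))^k * ((p:ZMod (p^n))^(n-k) * q + r) := by ring
  rw [← Nat.card_eq_of_bijective _ hb, Nat.card_zmod]

variable {p n : ℕ} {S : Type*} [CommRing S] [Algebra (ZMod (p ^ n)) S]
  {ι : Type*} [Fintype ι] (b : Module.Basis ι (ZMod (p ^ n)) S)

theorem pPowMulEqSmul (k : ℕ) (x : S) :
    (p : S) ^ k * x = ((p : ZMod (p ^ n)) ^ k) • x := by
  have h1 : ((p : ZMod (p ^ n)) ^ k) = ((p ^ k : ℕ) : ZMod (p ^ n)) := by push_cast; rfl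
  rw [h1, Nat.cast_smul_eq_nsmul, nsmul_eq_mul]; push_cast; ring

theorem compSpan (k : ℕ) (x : S) :
    x ∈ Ideal.span {(p : S) ^ k} ↔
      ∀ i, b.equivFun x i ∈ Ideal.span {(p : ZMod (p ^ n)) ^ k} := by
  constructor
  · intro hx i
    obtain ⟨y, rfl⟩ := Ideal.mem_span_singleton.mp hx
    rw [pPowMulEqSmul (p := p) (n := n)]
    rw [Ideal.mem_span_singleton, map_smul]
    exact ⟨b.equivFun y i, by simp [Pi.smul_apply, smul_eq_mul]⟩
  · intro h
    choose d hd using fun i => Ideal.mem_span_singleton.mp (h i)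
    rw [Ideal.mem_span_singleton]
    refine ⟨b.equivFun.symm d, ?_⟩
    have : (p : S) ^ k * b.equivFun.symm d = ((p : ZMod (p ^ n)) ^ k) • b.equivFun.symm d :=
      pPowMulEqSmul (p := p) (n := n) _ _
    rw [this]
    apply b.equivFun.injective
    rw [map_smul, LinearEquiv.apply_symm_apply]
    funext i
    simpa using hd i

theorem spanCard (b : Module.Basis ι (ZMod (p ^ n)) S) (hp : p.Prime) (k : ℕ) (hk : k ≤ n) :
    Nat.card {x : S // x ∈ Ideal.span {(p : S) ^ k}} = (p ^ (n - k)) ^ (Fintype.card ι) := by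
  have e1 : {x : S // x ∈ Ideal.span {(p : S) ^ k}} ≃
      {v : ι → ZMod (p ^ n) // ∀ i, v i ∈ Ideal.span {(p : ZMod (p ^ n)) ^ k}} :=
    Equiv.subtypeEquiv b.equivFun.toEquiv (fun x => compSpan b k x)
  have e2 := e1.trans (Equiv.subtypePiEquivPi
    (p := fun (_ : ι) (c : ZMod (p ^ n)) => c ∈ Ideal.span {(p : ZMod (p ^ n)) ^ k}))
  rw [Nat.card_congr e2, Nat.card_pi]
  simp [cardSpanPk p n k hp hk]

theorem cancelLemma (b : Module.Basis ι (ZMod (p ^ n)) S) (hp : p.Prime) (k : ℕ) (hk : k + 2 ≤ n) (d : S)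
    (h : (p : S) * d ∈ Ideal.span {(p : S) ^ (k + 2)}) :
    d ∈ Ideal.span {(p : S) ^ (k + 1)} := by
  rw [compSpan b] at h ⊢
  intro i
  have hpd : b.equivFun ((p : S) * d) i = (p : ZMod (p ^ n)) * b.equivFun d i := by
    have : (p : S) * d = ((p : ZMod (p ^ n)) ^ 1) • d := by
      rw [← pPowMulEqSmul (p := p) (n := n)]; ring
    rw [this, map_smul]; simp [smul_eq_mul]
  have h' := h i
  rw [hpd] at h'
  obtain ⟨c, hc⟩ := Ideal.mem_span_singleton.mp h'
  set a := b.equivFun d i with ha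
  have hkey : (p : ZMod (p ^ n)) ^ (n - (n-1)) * (a - (p : ZMod (p ^ n)) ^ (k + 1) * c) = 0 := by
    have hn1 : n - (n - 1) = 1 := by omega
    rw [hn1, pow_one, mul_sub, hc]
    have : (p : ZMod (p ^ n)) * ((p : ZMod (p ^ n)) ^ (k + 1) * c) =
        (p : ZMod (p ^ n)) ^ (k + 2) * c := by ring
    rw [this, sub_self]
  have hmem := (zmodSpanIff p n (n - 1) hp (by omega) _).mpr hkey
  have hsub : Ideal.span {(p : ZMod (p ^ n)) ^ (n - 1)} ≤
      Ideal.span {(p : ZMod (p ^ n)) ^ (k + 1)} := by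
    apply Ideal.span_singleton_le_span_singleton.mpr
    exact pow_dvd_pow _ (by omega)
  have h1 : a - (p : ZMod (p ^ n)) ^ (k + 1) * c ∈ Ideal.span {(p : ZMod (p ^ n)) ^ (k + 1)} :=
    hsub hmem
  have h2 : (p : ZMod (p ^ n)) ^ (k + 1) * c ∈ Ideal.span {(p : ZMod (p ^ n)) ^ (k + 1)} :=
    Ideal.mem_span_singleton.mpr ⟨c, rfl⟩
  simpa using Ideal.add_mem _ h1 h2

end Aux

theorem cardTorsionZMod (p m e : ℕ) (hp : p.Prime) (he : 1 ≤ e) (hm : m = p ^ e) :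
    Nat.card {c : Multiplicative (ZMod m) // c ^ p = 1} = p := by
  subst hm
  have hequiv : {c : Multiplicative (ZMod (p ^ e)) // c ^ p = 1} ≃
      {a : ZMod (p ^ e) // a ∈ Ideal.span {(p : ZMod (p ^ e)) ^ (e - 1)}} := by
    refine Equiv.subtypeEquiv Multiplicative.toAdd (fun c => ?_)
    rw [zmodSpanIff p e (e - 1) hp (by omega)]
    have h1 : e - (e - 1) = 1 := by omega
    rw [h1, pow_one]
    constructor
    · intro h
      have := congrArg Multiplicative.toAdd h
      simpa [toAdd_pow, nsmul_eq_mul] using this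
    · intro h
      apply Multiplicative.toAdd.injective
      simpa [toAdd_pow, nsmul_eq_mul] using h
  rw [Nat.card_congr hequiv, cardSpanPk p e (e - 1) hp (by omega)]
  have : e - (e - 1) = 1 := by omega
  rw [this, pow_one]

theorem stmt15 (p : ℕ) (hp : p.Prime) (hodd : p ≠ 2) (a0 lam : ℕ) (hlam : 1 ≤ lam)
    (f : Polynomial (ZMod (p ^ (a0 + 1)))) (hf : f.Monic) (hdeg : f.natDegree = lam)
    (hirr : Irreducible
      (f.map (ZMod.castHom (dvd_pow_self p (Nat.succ_ne_zero a0)) (ZMod p))))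
    (U : Subgroup (FuchsR p a0 f)ˣ)
    (hU : ∀ u : (FuchsR p a0 f)ˣ,
      u ∈ U ↔ (u : FuchsR p a0 f) - 1 ∈ Ideal.span {(p : FuchsR p a0 f)}) :
    Nonempty (U ≃* Multiplicative (Fin lam → ZMod (p ^ a0))) := by
  classical
  haveI hNZ : NeZero (p ^ (a0 + 1)) := ⟨pow_ne_zero _ hp.ne_zero⟩
  have hp0 : (p : FuchsR p a0 f) ^ (a0 + 1) = 0 := by
    have h1 : ((p ^ (a0 + 1) : ℕ) : FuchsR p a0 f) = 0 := by
      rw [← map_natCast (algebraMap (ZMod (p ^ (a0 + 1))) (FuchsR p a0 f)),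
        ZMod.natCast_self, map_zero]
    push_cast at h1; exact h1
  rcases Nat.eq_zero_or_pos a0 with ha0 | ha0
  · subst ha0
    have hpz : (p : FuchsR p 0 f) = 0 := by
      have h := hp0; rwa [pow_succ, pow_zero, one_mul] at h
    have h1 : ∀ u : (FuchsR p 0 f)ˣ, u ∈ U ↔ u = 1 := by
      intro u
      rw [hU u, hpz]
      constructor
      · intro h
        have h0 : (u : FuchsR p 0 f) - 1 = 0 :=
          zero_dvd_iff.mp (Ideal.mem_span_singleton.mp h)
        exact Units.ext (by rw [Units.val_one]; exact sub_eq_zero.mp h0)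
      · rintro rfl
        rw [Units.val_one, sub_self]
        exact Ideal.zero_mem _
    haveI : Unique U :=
      { default := ⟨1, (h1 1).mpr rfl⟩, uniq := fun a => Subtype.ext ((h1 a.1).mp a.2) }
    haveI : Unique (ZMod (p ^ 0)) := by
      rw [pow_zero]; exact inferInstanceAs (Unique (Fin 1))
    haveI : Unique (Multiplicative (Fin lam → ZMod (p ^ 0))) :=
      Equiv.unique Multiplicative.toAdd
    exact ⟨MulEquiv.ofUnique⟩
  · -- main case
    let b : Module.Basis (Fin f.natDegree) (ZMod (p ^ (a0 + 1))) (FuchsR p a0 f) :=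
      (AdjoinRoot.powerBasis' hf).basis
    haveI : Finite (FuchsR p a0 f) := Finite.of_equiv _ b.equivFun.toEquiv.symm
    have hspan_card : ∀ k, k ≤ a0 + 1 →
        Nat.card {x : FuchsR p a0 f // x ∈ Ideal.span {(p : FuchsR p a0 f) ^ k}} =
          (p ^ (a0 + 1 - k)) ^ lam := by
      intro k hk
      rw [spanCard b hp k hk, Fintype.card_fin, hdeg]
    have isNilp : ∀ x : FuchsR p a0 f,
        x ∈ Ideal.span {(p : FuchsR p a0 f)} → IsNilpotent x := by
      intro x hx
      obtain ⟨y, rfl⟩ := Ideal.mem_span_singleton.mp hx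
      exact ⟨a0 + 1, by rw [mul_pow, hp0, zero_mul]⟩
    have equivU : U ≃ {x : FuchsR p a0 f // x ∈ Ideal.span {(p : FuchsR p a0 f)}} := by
      refine ⟨fun u => ⟨(u.1 : FuchsR p a0 f) - 1, (hU u.1).mp u.2⟩,
        fun x => ⟨((isNilp x.1 x.2).isUnit_one_add).unit, (hU _).mpr (by
          rw [IsUnit.unit_spec]; simpa using x.2)⟩, ?_, ?_⟩
      · intro u
        apply Subtype.ext; apply Units.ext
        simp only [IsUnit.unit_spec]
        try ring
      · intro x
        apply Subtype.ext
        simp only [IsUnit.unit_spec]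
        try ring
    have hcardU : Nat.card U = p ^ (a0 * lam) := by
      rw [Nat.card_congr equivU]
      have h1 := hspan_card 1 (by omega)
      rw [pow_one] at h1
      rw [h1, ← pow_mul, Nat.add_sub_cancel]
    have hexp_ring : ∀ u : (FuchsR p a0 f)ˣ, u ∈ U → ∀ k,
        ((u : FuchsR p a0 f)) ^ (p ^ k) - 1 ∈
          Ideal.span {(p : FuchsR p a0 f) ^ (k + 1)} := by
      intro u hu k
      induction k with
      | zero => simpa [pow_one] using (hU u).mp hu
      | succ k ih =>
        obtain ⟨z, hz⟩ := binAux2 ((u : FuchsR p a0 f) ^ (p ^ k) - 1) p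
        obtain ⟨c, hc⟩ := Ideal.mem_span_singleton.mp ih
        rw [Ideal.mem_span_singleton]
        refine ⟨c + (p : FuchsR p a0 f) ^ k * c ^ 2 * z, ?_⟩
        have hxp : ((u : FuchsR p a0 f)) ^ (p ^ (k + 1)) =
            (((u : FuchsR p a0 f)) ^ (p ^ k)) ^ p := by
          rw [← pow_mul]
          congr 1
        have hz' : (((u : FuchsR p a0 f)) ^ (p ^ k)) ^ p =
            1 + p * (((u : FuchsR p a0 f)) ^ (p ^ k) - 1) +
              (((u : FuchsR p a0 f)) ^ (p ^ k) - 1) ^ 2 * z := by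
          rw [← hz]; congr 1; ring
        rw [hxp, hz', hc]
        ring
    have hexpU : ∀ u : U, u ^ (p ^ a0) = 1 := by
      intro u
      have h := hexp_ring u.1 u.2 a0
      rw [hp0] at h
      have h2 : ((u : (FuchsR p a0 f)ˣ) : FuchsR p a0 f) ^ (p ^ a0) - 1 = 0 :=
        zero_dvd_iff.mp (Ideal.mem_span_singleton.mp h)
      have h3 : ((u : (FuchsR p a0 f)ˣ) : FuchsR p a0 f) ^ (p ^ a0) = 1 := by
        rwa [sub_eq_zero] at h2
      have h4 : ((u ^ (p ^ a0) : U) : (FuchsR p a0 f)ˣ) = 1 := by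
        apply Units.ext
        simpa using h3
      exact Subtype.ext h4
    have htor_ring : ∀ u : (FuchsR p a0 f)ˣ, u ∈ U → (u : FuchsR p a0 f) ^ p = 1 →
        ∀ k, 1 ≤ k → k ≤ a0 →
          (u : FuchsR p a0 f) - 1 ∈ Ideal.span {(p : FuchsR p a0 f) ^ k} := by
      intro u hu hup k
      induction k with
      | zero => intro h1 _; omega
      | succ k ih =>
        intro _ h2
        rcases Nat.eq_zero_or_pos k with hk0 | hkpos
        · subst hk0; simpa [pow_one] using (hU u).mp hu
        · have hd := ih hkpos (by omega)
          obtain ⟨z, hz⟩ := binAux3 ((u : FuchsR p a0 f) - 1) p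
          obtain ⟨c, hc⟩ := Ideal.mem_span_singleton.mp hd
          obtain ⟨c2, hc2⟩ := Nat.Prime.dvd_choose_self hp (k := 2) (by norm_num)
            (by have := hp.two_le; omega)
          have heq : (1 : FuchsR p a0 f) = 1 + p * ((u : FuchsR p a0 f) - 1) +
              (p.choose 2 : ℕ) * ((u : FuchsR p a0 f) - 1) ^ 2 +
              ((u : FuchsR p a0 f) - 1) ^ 3 * z := by
            conv_lhs => rw [← hup]
            rw [← hz]; congr 1; ring
          have hpd : (p : FuchsR p a0 f) * ((u : FuchsR p a0 f) - 1) =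
              -(((p.choose 2 : ℕ) : FuchsR p a0 f) * ((u : FuchsR p a0 f) - 1) ^ 2) -
                ((u : FuchsR p a0 f) - 1) ^ 3 * z := by
            linear_combination -heq
          obtain ⟨j, rfl⟩ : ∃ j, k = j + 1 := ⟨k - 1, by omega⟩
          have hmem : (p : FuchsR p a0 f) * ((u : FuchsR p a0 f) - 1) ∈
              Ideal.span {(p : FuchsR p a0 f) ^ ((j + 1) + 2)} := by
            rw [Ideal.mem_span_singleton]
            refine ⟨-((p : FuchsR p a0 f) ^ j * (c2 : FuchsR p a0 f) * c ^ 2) -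
              ((p : FuchsR p a0 f) ^ j) ^ 2 * c ^ 3 * z, ?_⟩
            have hcc : ((p.choose 2 : ℕ) : FuchsR p a0 f) =
                (p : FuchsR p a0 f) * (c2 : FuchsR p a0 f) := by
              rw [hc2]; push_cast; ring
            rw [hpd, hc, hcc]
            ring
          exact cancelLemma b hp (j + 1) (by omega) _ hmem
    have hups : ∀ u : U, u ^ p = 1 → ((u : (FuchsR p a0 f)ˣ) : FuchsR p a0 f) ^ p = 1 := by
      intro u h
      have h1 := congrArg (fun v : U => ((v : (FuchsR p a0 f)ˣ) : FuchsR p a0 f)) h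
      simpa using h1
    have htor_le : Nat.card {u : U // u ^ p = 1} ≤ p ^ lam := by
      have hcard := hspan_card a0 (by omega)
      have he1 : a0 + 1 - a0 = 1 := by omega
      rw [he1, pow_one] at hcard
      have hinj : Function.Injective (fun (u : {u : U // u ^ p = 1}) =>
          (⟨((u.1.1 : (FuchsR p a0 f)ˣ) : FuchsR p a0 f) - 1,
            htor_ring u.1.1 u.1.2 (hups u.1 u.2) a0 (by omega) le_rfl⟩ :
            {x : FuchsR p a0 f // x ∈ Ideal.span {(p : FuchsR p a0 f) ^ a0}})) := by
        intro u v h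
        apply Subtype.ext; apply Subtype.ext; apply Units.ext
        have h2 := congrArg Subtype.val h
        simpa [sub_left_inj] using h2
      calc Nat.card {u : U // u ^ p = 1} ≤
          Nat.card {x : FuchsR p a0 f // x ∈ Ideal.span {(p : FuchsR p a0 f) ^ a0}} :=
            Nat.card_le_card_of_injective _ hinj
        _ = p ^ lam := hcard
    -- structure theorem
    obtain ⟨ι, hι, nn, h1n, ⟨E⟩⟩ := CommGroup.equiv_prod_multiplicative_zmod_of_finite U
    have hcardP : ∏ i, nn i = p ^ (a0 * lam) := by
      rw [← hcardU, Nat.card_congr E.toEquiv, Nat.card_pi]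
      exact (Finset.prod_congr rfl (fun i _ => by
        rw [Nat.card_congr Multiplicative.toAdd, Nat.card_zmod])).symm
    have hdvd : ∀ i, nn i ∣ p ^ a0 := by
      intro i
      haveI : NeZero (nn i) := ⟨by have := h1n i; omega⟩
      have hc : ∀ c : Multiplicative (ZMod (nn i)), c ^ (p ^ a0) = 1 := by
        intro c
        have h := hexpU (E.symm (Pi.mulSingle i c))
        have h3 : (Pi.mulSingle i c : ∀ j, Multiplicative (ZMod (nn j))) ^ (p ^ a0) = 1 := by
          have h2 := congrArg E h
          rwa [map_pow, MulEquiv.apply_symm_apply, map_one] at h2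
        have h4 := congrFun h3 i
        simpa [Pi.pow_apply, Pi.mulSingle_eq_same] using h4
      have h5 := hc (Multiplicative.ofAdd 1)
      have h6 : ((p ^ a0 : ℕ) : ZMod (nn i)) = 0 := by
        have h7 := congrArg Multiplicative.toAdd h5
        simpa [toAdd_pow, nsmul_eq_mul] using h7
      exact (ZMod.natCast_eq_zero_iff _ _).mp h6
    choose ee hee1 hee2 using fun i => (Nat.dvd_prime_pow hp).mp (hdvd i)
    have hee0 : ∀ i, 1 ≤ ee i := by
      intro i
      by_contra h
      have h1 : ee i = 0 := by omega
      have h2 := hee2 i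
      rw [h1, pow_zero] at h2
      have := h1n i; omega
    have htorP : Nat.card {g : (∀ i, Multiplicative (ZMod (nn i))) // g ^ p = 1} =
        p ^ (Fintype.card ι) := by
      have e1 : {g : (∀ i, Multiplicative (ZMod (nn i))) // g ^ p = 1} ≃
          ∀ i, {c : Multiplicative (ZMod (nn i)) // c ^ p = 1} := by
        refine (Equiv.subtypeEquivRight ?_).trans Equiv.subtypePiEquivPi
        intro g
        constructor
        · intro h i; have := congrFun h i; simpa using this
        · intro h; funext i; simpa using h i
      rw [Nat.card_congr e1, Nat.card_pi,
        Finset.prod_congr rfl (fun i _ => cardTorsionZMod p (nn i) (ee i) hp (hee0 i) (hee2 i)),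
        Finset.prod_const, Finset.card_univ]
    have htorU : Nat.card {u : U // u ^ p = 1} = p ^ Fintype.card ι := by
      rw [← htorP]
      apply Nat.card_congr
      refine Equiv.subtypeEquiv E.toEquiv (fun u => ?_)
      show u ^ p = 1 ↔ (E u) ^ p = 1
      exact ⟨fun h => by rw [← map_pow, h, map_one],
        fun h => E.injective (by rw [map_pow, h, map_one])⟩
    have hcardle : Fintype.card ι ≤ lam := by
      have h := htor_le
      rw [htorU] at h
      exact (Nat.pow_le_pow_iff_right hp.one_lt).mp h
    have hsum : ∑ i, ee i = a0 * lam := by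
      have h1 : ∏ i, nn i = p ^ (∑ i, ee i) := by
        rw [Finset.prod_congr rfl (fun i _ => by rw [hee2 i]), Finset.prod_pow_eq_pow_sum]
      rw [h1] at hcardP
      exact Nat.pow_right_injective hp.two_le hcardP
    have hsumle : ∑ i, ee i ≤ a0 * Fintype.card ι := by
      calc ∑ i, ee i ≤ ∑ _i : ι, a0 := Finset.sum_le_sum (fun i _ => hee1 i)
        _ = a0 * Fintype.card ι := by
          rw [Finset.sum_const, Finset.card_univ, smul_eq_mul, mul_comm]
    have hcard_eq : Fintype.card ι = lam := by
      have h1 : a0 * lam ≤ a0 * Fintype.card ι := by rw [← hsum]; exact hsumle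
      have h2 : lam ≤ Fintype.card ι := Nat.le_of_mul_le_mul_left h1 ha0
      omega
    have heea : ∀ i, ee i = a0 := by
      have hsum2 : ∑ i, ee i = ∑ _i : ι, a0 := by
        rw [Finset.sum_const, Finset.card_univ, smul_eq_mul, mul_comm, hsum, hcard_eq]
      intro i
      exact (Finset.sum_eq_sum_iff_of_le (fun i _ => hee1 i)).mp hsum2 i (Finset.mem_univ i)
    have E2 : ∀ i, Multiplicative (ZMod (nn i)) ≃* Multiplicative (ZMod (p ^ a0)) := fun i =>
      AddEquiv.toMultiplicative ((ZMod.ringEquivCongr (by rw [hee2 i, heea i])).toAddEquiv)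
    have eι : ι ≃ Fin lam := Fintype.equivFinOfCardEq hcard_eq
    exact ⟨E.trans ((MulEquiv.piCongrRight E2).trans
      ((MulEquiv.arrowCongr eι (MulEquiv.refl _)).trans
        (MulEquiv.funMultiplicative (Fin lam) (ZMod (p ^ a0))).symm))⟩
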